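/- Let f₁ and f₂ be any two maps in C(Σ, M) (constant maps allowed) that are not in the same ℂ*-orbit, i.e. there is no nonzero a ∈ ℂ with f₂ = f₁ ∘ g_a. Then there exist ε₁ > 0 and ε₂ > 0 such that the saturated sets { h ∘ g_a : d(h, f₁) < ε₁, a ∈ ℂ, a ≠ 0 } and { h ∘ g_a : d(h, f₂) < ε₂, a ∈ ℂ, a ≠ 0 } are disjoint. (The full ℂ*-space C(Σ, M) is G-Hausdorff.) -/

import Mathlib

open OnePoint

/-- The reparametrization `g_a : Σ → Σ` of the Riemann sphere `Σ = OnePoint ℂ`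
extending `z ↦ a · z` on `ℂ` and fixing the point at infinity. -/
noncomputable def gA (a : ℂ) (ha : a ≠ 0) : C(OnePoint ℂ, OnePoint ℂ) where
  toFun := OnePoint.map (fun z => a * z)
  continuous_toFun := (Homeomorph.onePointCongr (Homeomorph.mulLeft₀ a ha)).continuous

open Filter Topology Metric
open scoped ENNReal NNReal
set_option linter.unusedSectionVars false

section Aux

variable {M : Type*} [MetricSpace M] [CompactSpace M]

lemma gA_apply (a : ℂ) (ha : a ≠ 0) (z : OnePoint ℂ) :
    gA a ha z = OnePoint.map (fun w => a * w) z := rfl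

lemma gA_congr {a b : ℂ} (ha : a ≠ 0) (hb : b ≠ 0) (h : a = b) : gA a ha = gA b hb := by
  subst h; rfl

lemma gA_comp (a b : ℂ) (ha : a ≠ 0) (hb : b ≠ 0) :
    (gA a ha).comp (gA b hb) = gA (a * b) (mul_ne_zero ha hb) := by
  ext z
  induction z using OnePoint.rec with
  | infty => rfl
  | coe w =>
    show gA a ha (gA b hb w) = gA (a * b) _ w
    simp [gA_apply, mul_assoc]

lemma comp_gA_one (f : C(OnePoint ℂ, M)) : f.comp (gA 1 one_ne_zero) = f := by
  ext z
  induction z using OnePoint.rec with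
  | infty => rfl
  | coe w =>
    show f (gA 1 one_ne_zero w) = f w
    simp [gA_apply]

lemma dist_comp_le (f h : C(OnePoint ℂ, M)) (g : C(OnePoint ℂ, OnePoint ℂ)) :
    dist (f.comp g) (h.comp g) ≤ dist f h := by
  rw [ContinuousMap.dist_le dist_nonneg]
  intro x
  calc dist ((f.comp g) x) ((h.comp g) x) = dist (f (g x)) (h (g x)) := rfl
    _ ≤ dist f h := ContinuousMap.dist_apply_le_dist (g x)

lemma const_at_infty (f : C(OnePoint ℂ, M)) (m : M) (h : ∀ z : ℂ, f z = m) :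
    f ∞ = m := by
  have hfun : (f : OnePoint ℂ → M) = fun _ => m := by
    refine Continuous.ext_on (OnePoint.denseRange_coe (X := ℂ)) f.continuous
      continuous_const ?_
    rintro _ ⟨z, rfl⟩
    exact h z
  exact congrFun hfun ∞

lemma eq_of_tendsto_dist {x y : M} {m : ℕ → M} {ε : ℕ → ℝ}
    (hm : Tendsto m atTop (𝓝 y)) (hε : Tendsto ε atTop (𝓝 0))
    (hd : ∀ n, dist (m n) x ≤ ε n) : x = y := by
  have h1 : Tendsto (fun n => dist (m n) x) atTop (𝓝 (dist y x)) :=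
    hm.dist tendsto_const_nhds
  have h2 : dist y x ≤ 0 := le_of_tendsto_of_tendsto' h1 hε hd
  exact (dist_le_zero.1 h2).symm

lemma tendsto_coe_infty' {v : ℕ → ℂ} (hv : Tendsto (fun n => ‖v n‖) atTop atTop) :
    Tendsto (fun n => ((v n : ℂ) : OnePoint ℂ)) atTop (𝓝 ∞) := by
  refine OnePoint.tendsto_coe_infty.comp ?_
  rw [Filter.coclosedCompact_eq_cocompact, ← cobounded_eq_cocompact]
  exact tendsto_norm_atTop_iff_cobounded.1 hv

/-- The key limit argument: if `f₁ ∘ g_{cₙ}` converges uniformly to `f₂`, then `f₂` is in the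
`ℂ*`-orbit of `f₁`. -/
lemma orbit_of_limit (f₁ f₂ : C(OnePoint ℂ, M)) (c : ℕ → ℂ) (hc : ∀ n, c n ≠ 0)
    (ε : ℕ → ℝ) (hε : Tendsto ε atTop (𝓝 0))
    (hpt : ∀ (n : ℕ) (z : OnePoint ℂ),
      dist (f₁ (OnePoint.map (fun w => c n * w) z)) (f₂ z) ≤ ε n) :
    ∃ (a : ℂ) (ha : a ≠ 0), f₂ = f₁.comp (gA a ha) := by
  -- two facts independent of the limiting behaviour of `c`
  have hinfty : f₂ ∞ = f₁ ∞ := by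
    refine eq_of_tendsto_dist (m := fun _ => f₁ ∞) tendsto_const_nhds hε fun n => ?_
    simpa [dist_comm] using hpt n ∞
  have hzero : f₂ ((0 : ℂ) : OnePoint ℂ) = f₁ ((0 : ℂ) : OnePoint ℂ) := by
    refine eq_of_tendsto_dist (m := fun _ => f₁ ((0 : ℂ) : OnePoint ℂ)) tendsto_const_nhds hε
      fun n => ?_
    simpa using hpt n ((0 : ℂ) : OnePoint ℂ)
  -- extract a subsequence along which the norms converge in `[0, ∞]`
  obtain ⟨r, φ, hφ, hr⟩ := CompactSpace.tendsto_subseq (fun n => (‖c n‖₊ : ℝ≥0∞))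
  have hεφ : Tendsto (fun n => ε (φ n)) atTop (𝓝 0) := hε.comp hφ.tendsto_atTop
  by_cases hrt : r = ⊤
  · -- the norms tend to infinity; both maps are constant and equal
    rw [hrt] at hr
    have hnn : Tendsto (fun n => ‖c (φ n)‖₊) atTop atTop :=
      ENNReal.tendsto_coe_nhds_top.1 hr
    have hnorm : Tendsto (fun n => ‖c (φ n)‖) atTop atTop := by
      rw [← NNReal.tendsto_coe_atTop] at hnn
      simpa [coe_nnnorm] using hnn
    -- f₁ is constant on ℂ with value `f₂ 0 = f₁ 0`
    have hf1 : ∀ w : ℂ, f₁ (w : OnePoint ℂ) = f₁ ((0 : ℂ) : OnePoint ℂ) := by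
      intro w
      have hlim : Tendsto (fun n => (w * (c (φ n))⁻¹ : ℂ)) atTop (𝓝 0) := by
        rw [tendsto_zero_iff_norm_tendsto_zero]
        have : Tendsto (fun n => ‖w‖ * ‖c (φ n)‖⁻¹) atTop (𝓝 (‖w‖ * 0)) :=
          (tendsto_inv_atTop_zero.comp hnorm).const_mul _
        simpa [norm_inv] using this
      have hm : Tendsto (fun n => f₂ ((w * (c (φ n))⁻¹ : ℂ) : OnePoint ℂ)) atTop
          (𝓝 (f₂ ((0 : ℂ) : OnePoint ℂ))) :=
        (f₂.continuous.comp OnePoint.continuous_coe).continuousAt.tendsto.comp hlim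
      have heq : f₁ (w : OnePoint ℂ) = f₂ ((0 : ℂ) : OnePoint ℂ) := by
        refine eq_of_tendsto_dist hm hεφ fun n => ?_
        have hw : c (φ n) * (w * (c (φ n))⁻¹) = w := by
          rw [mul_comm w ((c (φ n))⁻¹), ← mul_assoc, mul_inv_cancel₀ (hc (φ n)), one_mul]
        have := hpt (φ n) ((w * (c (φ n))⁻¹ : ℂ) : OnePoint ℂ)
        rw [OnePoint.map_some, hw] at this
        simpa [dist_comm] using this
      rw [heq, hzero]
    have hf1infty : f₁ ∞ = f₁ ((0 : ℂ) : OnePoint ℂ) :=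
      const_at_infty f₁ _ hf1
    -- f₂ agrees with the same constant
    have hf2 : ∀ w : ℂ, f₂ (w : OnePoint ℂ) = f₁ ((0 : ℂ) : OnePoint ℂ) := by
      intro w
      rcases eq_or_ne w 0 with rfl | hw
      · exact hzero
      · have hwn : Tendsto (fun n => ‖c (φ n) * w‖) atTop atTop := by
          have := hnorm.atTop_mul_const (norm_pos_iff.2 hw)
          simpa [norm_mul] using this
        have hm : Tendsto (fun n => f₁ ((c (φ n) * w : ℂ) : OnePoint ℂ)) atTop (𝓝 (f₁ ∞)) :=
          f₁.continuous.continuousAt.tendsto.comp (tendsto_coe_infty' hwn)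
        have heq : f₂ (w : OnePoint ℂ) = f₁ ∞ := by
          refine eq_of_tendsto_dist hm hεφ fun n => ?_
          simpa using hpt (φ n) (w : OnePoint ℂ)
        rw [heq, hf1infty]
    refine ⟨1, one_ne_zero, ?_⟩
    rw [comp_gA_one]
    ext z
    induction z using OnePoint.rec with
    | infty => exact hinfty
    | coe w => rw [hf2 w, hf1 w]
  by_cases hr0 : r = 0
  · -- the norms tend to zero; both maps are constant and equal
    rw [hr0] at hr
    have hc0 : Tendsto (fun n => c (φ n)) atTop (𝓝 0) := by
      rw [tendsto_zero_iff_norm_tendsto_zero]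
      have hnn : Tendsto (fun n => ‖c (φ n)‖₊) atTop (𝓝 0) := by
        rw [← ENNReal.coe_zero] at hr
        exact ENNReal.tendsto_coe.1 hr
      have := (NNReal.tendsto_coe (x := 0)).2 hnn
      simpa [coe_nnnorm] using this
    -- f₂ is constant on ℂ with value `f₁ 0`
    have hf2 : ∀ w : ℂ, f₂ (w : OnePoint ℂ) = f₁ ((0 : ℂ) : OnePoint ℂ) := by
      intro w
      have hlim : Tendsto (fun n => (c (φ n) * w : ℂ)) atTop (𝓝 0) := by
        simpa using hc0.mul_const w
      have hm : Tendsto (fun n => f₁ ((c (φ n) * w : ℂ) : OnePoint ℂ)) atTop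
          (𝓝 (f₁ ((0 : ℂ) : OnePoint ℂ))) :=
        (f₁.continuous.comp OnePoint.continuous_coe).continuousAt.tendsto.comp hlim
      refine (eq_of_tendsto_dist hm hεφ fun n => ?_)
      simpa using hpt (φ n) (w : OnePoint ℂ)
    have hf2infty : f₂ ∞ = f₁ ((0 : ℂ) : OnePoint ℂ) :=
      const_at_infty f₂ _ hf2
    have hf1infty : f₁ ∞ = f₁ ((0 : ℂ) : OnePoint ℂ) := by
      rw [← hinfty, hf2infty]
    -- f₁ is constant as well
    have hf1 : ∀ w : ℂ, f₁ (w : OnePoint ℂ) = f₁ ((0 : ℂ) : OnePoint ℂ) := by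
      intro w
      rcases eq_or_ne w 0 with rfl | hw
      · rfl
      · have hpos : Tendsto (fun n => ‖c (φ n)‖) atTop (𝓝[>] 0) := by
          refine tendsto_nhdsWithin_of_tendsto_nhds_of_eventually_within _ ?_
            (Eventually.of_forall fun n => norm_pos_iff.2 (hc (φ n)))
          rw [← tendsto_zero_iff_norm_tendsto_zero]
          exact hc0
        have hwn : Tendsto (fun n => ‖w * (c (φ n))⁻¹‖) atTop atTop := by
          have hinv : Tendsto (fun n => ‖c (φ n)‖⁻¹) atTop atTop := hpos.inv_tendsto_nhdsGT_zero
          have := hinv.const_mul_atTop (norm_pos_iff.2 hw)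
          simpa [norm_mul, norm_inv] using this
        have hm : Tendsto (fun n => f₂ ((w * (c (φ n))⁻¹ : ℂ) : OnePoint ℂ)) atTop
            (𝓝 (f₂ ∞)) :=
          f₂.continuous.continuousAt.tendsto.comp (tendsto_coe_infty' hwn)
        have heq : f₁ (w : OnePoint ℂ) = f₂ ∞ := by
          refine eq_of_tendsto_dist hm hεφ fun n => ?_
          have hwc : c (φ n) * (w * (c (φ n))⁻¹) = w := by
            rw [mul_comm w ((c (φ n))⁻¹), ← mul_assoc, mul_inv_cancel₀ (hc (φ n)), one_mul]
          have := hpt (φ n) ((w * (c (φ n))⁻¹ : ℂ) : OnePoint ℂ)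
          rw [OnePoint.map_some, hwc] at this
          simpa [dist_comm] using this
        rw [heq, hf2infty]
    refine ⟨1, one_ne_zero, ?_⟩
    rw [comp_gA_one]
    ext z
    induction z using OnePoint.rec with
    | infty => exact hinfty
    | coe w => rw [hf2 w, hf1 w]
  · -- the norms converge to a finite nonzero limit: extract a convergent subsequence in ℂ
    lift r to ℝ≥0 using hrt
    have hr0' : r ≠ 0 := by simpa using hr0
    have hnn : Tendsto (fun n => ‖c (φ n)‖₊) atTop (𝓝 r) := ENNReal.tendsto_coe.1 hr
    have hnorm : Tendsto (fun n => ‖c (φ n)‖) atTop (𝓝 (r : ℝ)) := by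
      have := (NNReal.tendsto_coe (x := r)).2 hnn
      simpa [coe_nnnorm] using this
    have hbdd : ∀ᶠ n in atTop, c (φ n) ∈ closedBall (0 : ℂ) ((r : ℝ) + 1) := by
      filter_upwards [hnorm.eventually_le_const (by linarith [r.coe_nonneg] : (r : ℝ) < r + 1)]
        with n hn
      simpa [mem_closedBall, dist_eq_norm] using hn
    obtain ⟨ξ, -, ψ, hψ, hlim⟩ :=
      (isCompact_closedBall (0 : ℂ) ((r : ℝ) + 1)).tendsto_subseq' hbdd.frequently
    have hξnorm : ‖ξ‖ = (r : ℝ) := by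
      have h1 : Tendsto (fun n => ‖c (φ (ψ n))‖) atTop (𝓝 ‖ξ‖) :=
        (continuous_norm.continuousAt.tendsto).comp hlim
      have h2 : Tendsto (fun n => ‖c (φ (ψ n))‖) atTop (𝓝 (r : ℝ)) :=
        hnorm.comp hψ.tendsto_atTop
      exact tendsto_nhds_unique h1 h2
    have hξ : ξ ≠ 0 := by
      intro h
      apply hr0'
      rw [h, norm_zero] at hξnorm
      exact_mod_cast hξnorm.symm
    refine ⟨ξ, hξ, ?_⟩
    have hεψ : Tendsto (fun n => ε (φ (ψ n))) atTop (𝓝 0) := hεφ.comp hψ.tendsto_atTop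
    ext z
    induction z using OnePoint.rec with
    | infty =>
      show f₂ ∞ = f₁ (gA ξ hξ ∞)
      exact hinfty
    | coe w =>
      show f₂ (w : OnePoint ℂ) = f₁ (gA ξ hξ (w : OnePoint ℂ))
      rw [gA_apply, OnePoint.map_some]
      have hmul : Tendsto (fun n => (c (φ (ψ n)) * w : ℂ)) atTop (𝓝 (ξ * w)) :=
        hlim.mul_const w
      have hm : Tendsto (fun n => f₁ ((c (φ (ψ n)) * w : ℂ) : OnePoint ℂ)) atTop
          (𝓝 (f₁ ((ξ * w : ℂ) : OnePoint ℂ))) :=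
        (f₁.continuous.comp OnePoint.continuous_coe).continuousAt.tendsto.comp hmul
      refine eq_of_tendsto_dist hm hεψ fun n => ?_
      simpa using hpt (φ (ψ n)) (w : OnePoint ℂ)

end Aux

/-- Any two continuous maps `Σ → M` (constant maps allowed) not in the same `ℂ*`-orbit admit
disjoint saturated (`ℂ*`-invariant) neighbourhoods: the full `ℂ*`-space `C(Σ, M)` is
G-Hausdorff. -/
theorem G_Hausdorff_full {M : Type*} [MetricSpace M] [CompactSpace M]
    (f₁ f₂ : C(OnePoint ℂ, M))
    (horb : ¬ ∃ (a : ℂ) (ha : a ≠ 0), f₂ = f₁.comp (gA a ha)) :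
    ∃ ε₁ > 0, ∃ ε₂ > 0,
      Disjoint
        {k : C(OnePoint ℂ, M) | ∃ (h : C(OnePoint ℂ, M)) (a : ℂ) (ha : a ≠ 0),
          dist h f₁ < ε₁ ∧ k = h.comp (gA a ha)}
        {k : C(OnePoint ℂ, M) | ∃ (h : C(OnePoint ℂ, M)) (a : ℂ) (ha : a ≠ 0),
          dist h f₂ < ε₂ ∧ k = h.comp (gA a ha)} := by
  by_contra H
  push_neg at H
  apply horb
  have key : ∀ n : ℕ, ∃ (c : ℂ) (hc : c ≠ 0),
      dist (f₁.comp (gA c hc)) f₂ ≤ 2 / ((n : ℝ) + 1) := by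
    intro n
    have hpos : (0 : ℝ) < 1 / ((n : ℝ) + 1) := by positivity
    obtain ⟨k, hk₁, hk₂⟩ := Set.not_disjoint_iff.1 (H _ hpos _ hpos)
    obtain ⟨h₁, a, ha, hd₁, rfl⟩ := hk₁
    obtain ⟨h₂, b, hb, hd₂, hk⟩ := hk₂
    have hbinv : b⁻¹ ≠ 0 := inv_ne_zero hb
    have hc : a * b⁻¹ ≠ 0 := mul_ne_zero ha hbinv
    refine ⟨a * b⁻¹, hc, ?_⟩
    have e2 : h₂ = h₁.comp (gA (a * b⁻¹) hc) := by
      have := congrArg (fun k => ContinuousMap.comp k (gA b⁻¹ hbinv)) hk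
      simp only [ContinuousMap.comp_assoc, gA_comp] at this
      rw [gA_congr (mul_ne_zero hb hbinv) one_ne_zero (mul_inv_cancel₀ hb),
        comp_gA_one] at this
      exact this.symm
    calc dist (f₁.comp (gA (a * b⁻¹) hc)) f₂
        ≤ dist (f₁.comp (gA (a * b⁻¹) hc)) (h₁.comp (gA (a * b⁻¹) hc))
            + dist (h₁.comp (gA (a * b⁻¹) hc)) f₂ := dist_triangle _ _ _
      _ = dist (f₁.comp (gA (a * b⁻¹) hc)) (h₁.comp (gA (a * b⁻¹) hc)) + dist h₂ f₂ := by
            rw [← e2]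
      _ ≤ dist f₁ h₁ + dist h₂ f₂ := add_le_add (dist_comp_le _ _ _) le_rfl
      _ ≤ 1 / ((n : ℝ) + 1) + 1 / ((n : ℝ) + 1) := by
            have := hd₁
            rw [dist_comm] at this
            exact add_le_add this.le hd₂.le
      _ = 2 / ((n : ℝ) + 1) := by ring
  choose c hc hd using key
  have hpt : ∀ (n : ℕ) (z : OnePoint ℂ),
      dist (f₁ (OnePoint.map (fun w => c n * w) z)) (f₂ z) ≤ 2 / ((n : ℝ) + 1) := by
    intro n z
    exact le_trans (ContinuousMap.dist_apply_le_dist (f := f₁.comp (gA (c n) (hc n))) (g := f₂) z) (hd n)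
  have hε : Filter.Tendsto (fun n : ℕ => 2 / ((n : ℝ) + 1)) Filter.atTop (nhds 0) :=
    Filter.Tendsto.div_atTop tendsto_const_nhds
      (Filter.tendsto_atTop_add_const_right _ 1 tendsto_natCast_atTop_atTop)
  exact orbit_of_limit f₁ f₂ c hc _ hε hpt
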